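/- Let T be a Souslin tree with the interval topology. Then for every stationary S ⊆ ω₁ and every uncountable A ⊆ T, there exists γ ∈ S such that the closure of A in T intersects level γ of T. -/

import Mathlib

noncomputable def omega1 : Ordinal := (Cardinal.aleph 1).ord

/-- `C` is a club (closed unbounded set) in `ω₁`. -/
def IsClubInOmega1 (C : Set Ordinal) : Prop :=
  C ⊆ Set.Iio omega1 ∧
  (∀ o < omega1, ∃ c ∈ C, o ≤ c) ∧
  (∀ o, o < omega1 → Order.IsSuccLimit o → (∀ p < o, ∃ c ∈ C, p < c ∧ c < o) → o ∈ C)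

/-- `S ⊆ ω₁` is stationary: it meets every club in `ω₁`. -/
def IsStationaryInOmega1 (S : Set Ordinal) : Prop :=
  S ⊆ Set.Iio omega1 ∧ ∀ C, IsClubInOmega1 C → (S ∩ C).Nonempty

/-- Data exhibiting a partial order `T` as a Souslin tree of height `ω₁`:
the predecessors of any point form a chain enumerated by the height function,
there is a point at every level `β < ω₁`, and all levels, chains and
antichains are countable. -/
structure SouslinTreeData (T : Type*) [PartialOrder T] where
  height : T → Ordinal.{v}
  height_lt : ∀ t, height t < omega1
  height_mono : ∀ s t : T, s < t → height s < height t
  pred_linear : ∀ t s₁ s₂ : T, s₁ < t → s₂ < t → s₁ ≤ s₂ ∨ s₂ ≤ s₁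
  pred_exists : ∀ t : T, ∀ β < height t, ∃ s, s < t ∧ height s = β
  height_surj : ∀ β < omega1, ∃ t : T, height t = β
  levels_countable : ∀ β : Ordinal, {t : T | height t = β}.Countable
  chains_countable : ∀ C : Set T, IsChain (· ≤ ·) C → C.Countable
  antichains_countable : ∀ A : Set T,
    (A.Pairwise fun a b => ¬ a ≤ b ∧ ¬ b ≤ a) → A.Countable

/-- The interval topology on a tree, generated by the half-open intervals
`(s, t]` together with the singletons of minimal elements. -/
def intervalTopology (T : Type*) [PartialOrder T] : TopologicalSpace T :=
  TopologicalSpace.generateFrom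
    ({U | ∃ s t : T, U = {x | s < x ∧ x ≤ t}} ∪
     {U | ∃ t : T, (∀ s, ¬ s < t) ∧ U = {t}})

/-! ### Auxiliary ordinal lemmas -/

universe u

open Ordinal Cardinal Set

lemma STAux.omega1_isLimit : Order.IsSuccLimit omega1.{u} :=
  Cardinal.isSuccLimit_ord (Cardinal.aleph0_le_aleph 1)

lemma STAux.omega1_pos : 0 < omega1.{u} := STAux.omega1_isLimit.pos

lemma STAux.one_lt_omega1 : 1 < omega1.{u} := by
  refine Cardinal.lt_ord.mpr ?_
  simpa using Cardinal.one_lt_aleph0.trans Cardinal.aleph0_lt_aleph_one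

lemma STAux.succ_lt_omega1 {o : Ordinal.{u}} (h : o < omega1) : Order.succ o < omega1 :=
  STAux.omega1_isLimit.succ_lt h

lemma STAux.cof_omega1 : omega1.{u}.cof = Cardinal.aleph 1 :=
  Cardinal.isRegular_aleph_one.cof_eq

lemma STAux.nat_card_lt_cof : Cardinal.lift.{u} #ℕ < omega1.{u}.cof := by
  rw [Cardinal.mk_nat, Cardinal.lift_aleph0, STAux.cof_omega1]
  exact Cardinal.aleph0_lt_aleph_one

lemma STAux.countable_Iio_omega1 {o : Ordinal.{u}} (h : o < omega1) :
    (Set.Iio o).Countable := by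
  rw [Cardinal.countable_iff_lt_aleph_one, Ordinal.mk_Iio_ordinal]
  exact Cardinal.lift_lt_aleph_one.mpr (Cardinal.lt_ord.mp h)

lemma STAux.countable_Iic_omega1 {o : Ordinal.{u}} (h : o < omega1) :
    (Set.Iic o).Countable :=
  Set.Countable.mono (Set.Iic_subset_Iio.mpr (Order.lt_succ _))
    (STAux.countable_Iio_omega1 (STAux.succ_lt_omega1 h))

lemma STAux.bsup_lt_omega1 {o : Ordinal.{u}} (ho : o < omega1) (f : ∀ a < o, Ordinal.{u})
    (hf : ∀ a ha, f a ha < omega1) : Ordinal.bsup.{u,u} o f < omega1 :=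
  Ordinal.bsup_lt_ord (by rw [STAux.cof_omega1]; exact Cardinal.lt_ord.mp ho) hf

lemma STAux.bounded_of_countable {s : Set Ordinal.{u}} (hsub : ∀ x ∈ s, x < omega1)
    (hs : s.Countable) : ∃ b, b < omega1 ∧ ∀ x ∈ s, x < b := by
  rcases s.eq_empty_or_nonempty with rfl | hne
  · exact ⟨1, STAux.one_lt_omega1, by simp⟩
  · obtain ⟨f, rfl⟩ := Set.Countable.exists_eq_range hs hne
    refine ⟨⨆ n, Order.succ (f n), ?_, ?_⟩
    · exact Ordinal.iSup_lt_ord_lift STAux.nat_card_lt_cof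
        (fun n => STAux.succ_lt_omega1 (hsub _ (Set.mem_range_self n)))
    · rintro x ⟨n, rfl⟩
      exact lt_of_lt_of_le (Order.lt_succ _) (Ordinal.le_iSup (fun n => Order.succ (f n)) n)

lemma STAux.unbounded_of_not_countable {s : Set Ordinal.{u}} (hsub : ∀ x ∈ s, x < omega1)
    (hs : ¬ s.Countable) : ∀ b < omega1, ∃ u ∈ s, b < u := by
  intro b hb
  by_contra h
  push_neg at h
  exact hs (Set.Countable.mono (fun x hx => h x hx) (STAux.countable_Iic_omega1 hb))

/-- The diagonal intersection of a family of clubs (restricted to positive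
ordinals) is a club. -/
lemma STAux.diagonal_club (C : Ordinal.{u} → Set Ordinal.{u})
    (hC : ∀ β, IsClubInOmega1 (C β)) :
    IsClubInOmega1 {γ | γ < omega1 ∧ 0 < γ ∧ ∀ β < γ, γ ∈ C β} := by
  have hpick : ∀ β δ, δ < omega1.{u} → ∃ c, c ∈ C β ∧ δ < c ∧ c < omega1 := by
    intro β δ hδ
    obtain ⟨c, hc, hc2⟩ := (hC β).2.1 (Order.succ δ) (STAux.succ_lt_omega1 hδ)
    exact ⟨c, hc, lt_of_lt_of_le (Order.lt_succ δ) hc2, (hC β).1 hc⟩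
  choose! pick hpick1 hpick2 hpick3 using hpick
  have hbound : ∀ δ, δ < omega1.{u} → ∃ b, b < omega1 ∧ ∀ β < δ, pick β δ < b := by
    intro δ hδ
    obtain ⟨b, hb1, hb2⟩ := STAux.bounded_of_countable (s := (fun β => pick β δ) '' (Set.Iio δ))
      (by rintro x ⟨β, hβ, rfl⟩; exact hpick3 β δ hδ)
      ((STAux.countable_Iio_omega1 hδ).image _)
    exact ⟨b, hb1, fun β hβ => hb2 _ ⟨β, hβ, rfl⟩⟩
  choose! bnd hbnd1 hbnd2 using hbound
  refine ⟨fun γ hγ => hγ.1, ?_, ?_⟩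
  · -- unbounded
    intro o ho
    set h : Ordinal.{u} → Ordinal.{u} := fun δ => Order.succ (δ ⊔ bnd δ) with hh
    have hlt : ∀ δ, δ < omega1 → (δ < h δ ∧ h δ < omega1) :=
      fun δ hδ => ⟨lt_of_le_of_lt le_sup_left (Order.lt_succ _),
        STAux.succ_lt_omega1 (sup_lt_iff.mpr ⟨hδ, hbnd1 δ hδ⟩)⟩
    set o' : ℕ → Ordinal.{u} := fun n => Nat.rec (o ⊔ 1) (fun _ x => h x) n with ho'
    have ho'lt : ∀ n, o' n < omega1 := by
      intro n
      induction n with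
      | zero => exact sup_lt_iff.mpr ⟨ho, STAux.one_lt_omega1⟩
      | succ n ih => exact (hlt _ ih).2
    have hmono : ∀ n, o' n < o' (n + 1) := fun n => (hlt _ (ho'lt n)).1
    have hmonoS : StrictMono o' := strictMono_nat_of_lt_succ hmono
    have hmono'' : ∀ m n, m ≤ n → o' m ≤ o' n := fun m n hmn => hmonoS.monotone hmn
    set δ : Ordinal.{u} := ⨆ n, o' n with hδdef
    have hδlt : δ < omega1 := Ordinal.iSup_lt_ord_lift STAux.nat_card_lt_cof ho'lt
    have hle : ∀ n, o' n ≤ δ := fun n => Ordinal.le_iSup o' n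
    have hltδ : ∀ n, o' n < δ := fun n => lt_of_lt_of_le (hmono n) (hle (n + 1))
    have hδlim : Order.IsSuccLimit δ := by
      rw [Ordinal.isSuccLimit_iff]
      constructor
      · intro h0
        have := hltδ 0
        rw [h0] at this
        exact absurd this (not_lt_of_ge zero_le)
      · apply Order.isSuccPrelimit_of_succ_lt
        intro p hp
        obtain ⟨n, hn⟩ := Ordinal.lt_iSup_iff.mp hp
        exact lt_of_le_of_lt (Order.succ_le_of_lt hn) (hltδ n)
    refine ⟨δ, ⟨hδlt, ?_, ?_⟩, ?_⟩
    · have h1 : (1 : Ordinal) ≤ o' 0 := le_sup_right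
      exact lt_of_lt_of_le (lt_of_lt_of_le zero_lt_one h1) (le_of_lt (hltδ 0))
    · intro β hβ
      refine (hC β).2.2 δ hδlt hδlim ?_
      intro p hp
      obtain ⟨n1, hn1⟩ := Ordinal.lt_iSup_iff.mp hβ
      obtain ⟨n2, hn2⟩ := Ordinal.lt_iSup_iff.mp hp
      have hβn : β < o' (max n1 n2) := lt_of_lt_of_le hn1 (hmono'' _ _ (Nat.le_max_left _ _))
      have hpn : p < o' (max n1 n2) := lt_of_lt_of_le hn2 (hmono'' _ _ (Nat.le_max_right _ _))
      set m := max n1 n2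
      have hom : o' m < omega1 := ho'lt m
      refine ⟨pick β (o' m), hpick1 β (o' m) hom, lt_trans hpn (hpick2 β (o' m) hom), ?_⟩
      have h1 : pick β (o' m) < bnd (o' m) := hbnd2 (o' m) hom β hβn
      have h2 : pick β (o' m) < h (o' m) :=
        lt_of_lt_of_le (lt_of_lt_of_le h1 le_sup_right) (le_of_lt (Order.lt_succ _))
      exact lt_of_lt_of_le h2 (hle (m + 1))
    · exact le_of_lt (lt_of_le_of_lt le_sup_left (hltδ 0))
  · -- closed
    intro o ho holim happ
    refine ⟨ho, holim.pos, ?_⟩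
    intro β hβ
    refine (hC β).2.2 o ho holim ?_
    intro p hp
    obtain ⟨c, ⟨hc1, hc2, hc3⟩, hpc, hco⟩ := happ (p ⊔ β) (sup_lt_iff.mpr ⟨hp, hβ⟩)
    exact ⟨c, hc3 β (lt_of_le_of_lt le_sup_right hpc), lt_of_le_of_lt le_sup_left hpc, hco⟩

/-- The club of ordinals above a fixed `b < ω₁`. -/
lemma STAux.tail_club {b : Ordinal.{u}} (hb : b < omega1) :
    IsClubInOmega1 {o | b < o ∧ o < omega1} := by
  refine ⟨fun γ hγ => hγ.2, ?_, ?_⟩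
  · intro o ho
    refine ⟨Order.succ (o ⊔ b), ⟨?_, STAux.succ_lt_omega1 (sup_lt_iff.mpr ⟨ho, hb⟩)⟩, ?_⟩
    · exact lt_of_le_of_lt le_sup_right (Order.lt_succ _)
    · exact le_of_lt (lt_of_le_of_lt le_sup_left (Order.lt_succ _))
  · intro o ho holim happ
    obtain ⟨c, ⟨hc1, _⟩, _, hco⟩ := happ 0 holim.pos
    exact ⟨lt_trans hc1 hco, ho⟩

/-- A transfinite sequence obtained by repeatedly applying `next` to the
supremum of the previous values together with their `F`-images. -/
noncomputable def STAux.seqA (next F : Ordinal.{u} → Ordinal.{u}) (α : Ordinal.{u}) :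
    Ordinal.{u} :=
  next (Ordinal.bsup.{u,u} α (fun i _ => STAux.seqA next F i ⊔ F (STAux.seqA next F i)))
termination_by α
decreasing_by all_goals assumption

lemma STAux.seqA_eq (next F : Ordinal.{u} → Ordinal.{u}) (α : Ordinal.{u}) :
    STAux.seqA next F α =
      next (Ordinal.bsup.{u,u} α
        (fun i _ => STAux.seqA next F i ⊔ F (STAux.seqA next F i))) := by
  rw [STAux.seqA]

lemma STAux.seqA_prop (next F : Ordinal.{u} → Ordinal.{u}) (U : Set Ordinal.{u})
    (hnext : ∀ b, b < omega1 → next b ∈ U ∧ b < next b)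
    (hU : ∀ x ∈ U, x < omega1) (hF : ∀ o, F o < omega1) :
    ∀ j, j < omega1 → (STAux.seqA next F j ∈ U ∧
      ∀ i, i < j → STAux.seqA next F i < STAux.seqA next F j ∧
        F (STAux.seqA next F i) < STAux.seqA next F j) := by
  intro j
  induction j using Ordinal.induction with
  | _ j IH =>
    intro hj
    have hbs : Ordinal.bsup.{u,u} j
        (fun i _ => STAux.seqA next F i ⊔ F (STAux.seqA next F i)) < omega1 := by
      refine STAux.bsup_lt_omega1 hj _ (fun i hi => ?_)
      exact sup_lt_iff.mpr ⟨hU _ ((IH i hi (hi.trans hj)).1), hF _⟩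
    have hgj := STAux.seqA_eq next F j
    constructor
    · rw [hgj]; exact (hnext _ hbs).1
    · intro i hi
      have h1 := Ordinal.le_bsup.{u,u}
        (fun i _ => STAux.seqA next F i ⊔ F (STAux.seqA next F i)) i hi
      have h2 : Ordinal.bsup.{u,u} j
          (fun i _ => STAux.seqA next F i ⊔ F (STAux.seqA next F i))
            < STAux.seqA next F j := by
        rw [hgj]; exact (hnext _ hbs).2
      exact ⟨lt_of_le_of_lt (le_trans le_sup_left h1) h2,
        lt_of_le_of_lt (le_trans le_sup_right h1) h2⟩

lemma STAux.seqA_le (next F : Ordinal.{u} → Ordinal.{u}) (U : Set Ordinal.{u})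
    (hnext : ∀ b, b < omega1 → next b ∈ U ∧ b < next b)
    (hU : ∀ x ∈ U, x < omega1) (hF : ∀ o, F o < omega1) :
    ∀ j, j < omega1 → j ≤ STAux.seqA next F j := by
  intro j
  induction j using Ordinal.induction with
  | _ j IH =>
    intro hj
    by_contra hlt
    push_neg at hlt
    have h1 : STAux.seqA next F j ≤ STAux.seqA next F (STAux.seqA next F j) :=
      IH _ hlt (hlt.trans hj)
    have h2 : STAux.seqA next F (STAux.seqA next F j) < STAux.seqA next F j :=
      ((STAux.seqA_prop next F U hnext hU hF j hj).2 _ hlt).1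
    exact absurd (lt_of_le_of_lt h1 h2) (lt_irrefl _)

/-! ### Auxiliary topology lemmas -/

section TreeAux

variable {T : Type*} [PartialOrder T]

lemma STAux.interval_of_open (τ : SouslinTreeData T) {U : Set T}
    (hU : TopologicalSpace.GenerateOpen
      ({V | ∃ s t : T, V = {x | s < x ∧ x ≤ t}} ∪
       {V | ∃ t : T, (∀ s, ¬ s < t) ∧ V = {t}}) U)
    {x s₀ : T} (hs₀ : s₀ < x) (hx : x ∈ U) :
    ∃ s, s < x ∧ ∀ y, s < y → y ≤ x → y ∈ U := by
  induction hU with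
  | basic V hV =>
    rcases hV with hV | hV
    · obtain ⟨s, t, rfl⟩ := hV
      exact ⟨s, hx.1, fun y hy1 hy2 => ⟨hy1, le_trans hy2 hx.2⟩⟩
    · obtain ⟨t, ht, rfl⟩ := hV
      simp only [Set.mem_singleton_iff] at hx
      subst hx
      exact absurd hs₀ (ht s₀)
  | univ => exact ⟨s₀, hs₀, fun y _ _ => trivial⟩
  | inter V W _ _ ihV ihW =>
    obtain ⟨s1, hs1, h1⟩ := ihV hx.1
    obtain ⟨s2, hs2, h2⟩ := ihW hx.2
    rcases τ.pred_linear x s1 s2 hs1 hs2 with h | h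
    · exact ⟨s2, hs2, fun y hy1 hy2 =>
        ⟨h1 y (lt_of_le_of_lt h hy1) hy2, h2 y hy1 hy2⟩⟩
    · exact ⟨s1, hs1, fun y hy1 hy2 =>
        ⟨h1 y hy1 hy2, h2 y (lt_of_le_of_lt h hy1) hy2⟩⟩
  | sUnion 𝒮 _ ih =>
    obtain ⟨V, hV𝒮, hxV⟩ := hx
    obtain ⟨s, hs, h⟩ := ih V hV𝒮 hxV
    exact ⟨s, hs, fun y hy1 hy2 => ⟨V, hV𝒮, h y hy1 hy2⟩⟩

lemma STAux.exists_gap (τ : SouslinTreeData T) {A : Set T} {x s₀ : T} (hs₀ : s₀ < x)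
    (hx : x ∉ @closure T (intervalTopology T) A) :
    ∃ s, s < x ∧ ∀ y ∈ A, ¬ (s < y ∧ y ≤ x) := by
  letI := intervalTopology T
  have hop : IsOpen (closure A)ᶜ := isClosed_closure.isOpen_compl
  have hgen : TopologicalSpace.GenerateOpen
      ({V | ∃ s t : T, V = {x | s < x ∧ x ≤ t}} ∪
       {V | ∃ t : T, (∀ s, ¬ s < t) ∧ V = {t}}) (closure A)ᶜ := hop
  obtain ⟨s, hs, h⟩ := STAux.interval_of_open τ hgen hs₀ hx
  exact ⟨s, hs, fun y hy hc => (h y hc.1 hc.2) (subset_closure hy)⟩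

/-- If `c` and `d` are comparable and the height of `c` is at most the height
of `d`, then `c ≤ d`. -/
lemma STAux.le_of_height_le (τ : SouslinTreeData T) {c d : T} (h : c ≤ d ∨ d ≤ c)
    (hh : τ.height c ≤ τ.height d) : c ≤ d := by
  rcases h with h | h
  · exact h
  · rcases lt_or_eq_of_le h with h' | h'
    · exact absurd (τ.height_mono _ _ h') (not_lt.mpr hh)
    · exact le_of_eq h'.symm

end TreeAux

/-- In a Souslin tree with the interval topology, for every stationary
`S ⊆ ω₁` and every uncountable `A ⊆ T`, the closure of `A` meets level `γ`
of the tree for some `γ ∈ S`. -/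
theorem souslin_tree_closure_meets_stationary_level {T : Type*} [PartialOrder T]
    (τ : SouslinTreeData T) (S : Set Ordinal) (hS : IsStationaryInOmega1 S)
    (A : Set T) (hA : ¬ A.Countable) :
    ∃ γ ∈ S, ((@closure T (intervalTopology T) A) ∩ {t : T | τ.height t = γ}).Nonempty := by
  by_contra hcon
  push_neg at hcon
  have hTne : Nonempty T := by
    obtain ⟨t0, _⟩ := τ.height_surj 0 STAux.omega1_pos
    exact ⟨t0⟩
  -- `A` has elements of arbitrarily large height
  have hbig : ∀ γ, γ < omega1 → ∃ a ∈ A, γ < τ.height a := by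
    intro γ hγ
    by_contra hcontra
    push_neg at hcontra
    apply hA
    have hsub : A ⊆ ⋃ β ∈ Set.Iic γ, {t : T | τ.height t = β} :=
      fun t ht => Set.mem_biUnion (hcontra t ht) rfl
    exact Set.Countable.mono hsub
      ((STAux.countable_Iic_omega1 hγ).biUnion (fun β _ => τ.levels_countable β))
  -- for every positive `γ ∈ S`, a point `x` at level `γ` below a point of `A`,
  -- together with a gap `(s, x]` missing `A`
  have key : ∀ γ, γ ∈ S → 0 < γ → ∃ s x a : T, a ∈ A ∧ s < x ∧ x < a ∧
      τ.height x = γ ∧ ∀ y ∈ A, ¬ (s < y ∧ y ≤ x) := by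
    intro γ hγS hγ0
    have hγ : γ < omega1 := hS.1 hγS
    obtain ⟨a, haA, hha⟩ := hbig γ hγ
    obtain ⟨x, hxa, hhx⟩ := τ.pred_exists a γ hha
    obtain ⟨s₀, hs₀, _⟩ := τ.pred_exists x 0 (by rw [hhx]; exact hγ0)
    have hxcl : x ∉ @closure T (intervalTopology T) A := by
      intro hmem
      exact Set.eq_empty_iff_forall_notMem.mp (hcon γ hγS) x ⟨hmem, hhx⟩
    obtain ⟨s, hsx, hgap⟩ := STAux.exists_gap τ hs₀ hxcl
    exact ⟨s, x, a, haA, hsx, hxa, hhx, hgap⟩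
  choose! s x a haA hsx hxa hhx hgap using key
  -- the fibers of the pressing-down function `γ ↦ height (s γ)`
  set Fib : Ordinal → Set Ordinal :=
    fun β => {γ | γ ∈ S ∧ 0 < γ ∧ τ.height (s γ) = β} with hFibDef
  by_cases hst : ∃ β, IsStationaryInOmega1 (Fib β)
  · -- a stationary fiber exists: extract an unbounded set with constant `s γ = v`
    obtain ⟨β₀, hβ₀⟩ := hst
    have hFnc : ¬ (Fib β₀).Countable := by
      intro hcnt
      obtain ⟨b, hb, hbd⟩ := STAux.bounded_of_countable (fun γ hγ => hS.1 hγ.1) hcnt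
      obtain ⟨γ, hγF, hγT⟩ := hβ₀.2 _ (STAux.tail_club hb)
      exact absurd (hbd γ hγF) (not_lt.mpr (le_of_lt hγT.1))
    have hone : ∃ v, ¬ {γ | γ ∈ Fib β₀ ∧ s γ = v}.Countable := by
      by_contra hall
      push_neg at hall
      have hdec : Fib β₀ ⊆ ⋃ v ∈ {t : T | τ.height t = β₀}, {γ | γ ∈ Fib β₀ ∧ s γ = v} :=
        fun γ hγ => Set.mem_biUnion (show s γ ∈ {t : T | τ.height t = β₀} from hγ.2.2) ⟨hγ, rfl⟩
      exact hFnc (Set.Countable.mono hdec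
        ((τ.levels_countable β₀).biUnion (fun v _ => hall v)))
    obtain ⟨v, hUnc⟩ := hone
    set U : Set Ordinal := {γ | γ ∈ Fib β₀ ∧ s γ = v} with hUdef
    have hUsub : ∀ γ ∈ U, γ < omega1 := fun γ hγ => hS.1 hγ.1.1
    have hUS : ∀ γ ∈ U, γ ∈ S := fun γ hγ => hγ.1.1
    have hU0 : ∀ γ ∈ U, 0 < γ := fun γ hγ => hγ.1.2.1
    have hUv : ∀ γ ∈ U, s γ = v := fun γ hγ => hγ.2
    have hUnb := STAux.unbounded_of_not_countable hUsub hUnc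
    have hnextEx : ∀ b, b < omega1 → ∃ c, c ∈ U ∧ b < c := by
      intro b hb
      obtain ⟨c, h1, h2⟩ := hUnb b hb
      exact ⟨c, h1, h2⟩
    choose! next hnext1 hnext2 using hnextEx
    have hnext : ∀ b, b < omega1 → next b ∈ U ∧ b < next b :=
      fun b hb => ⟨hnext1 b hb, hnext2 b hb⟩
    set F : Ordinal → Ordinal := fun γ => τ.height (a γ) with hFdef
    have hF : ∀ o, F o < omega1 := fun o => τ.height_lt _
    set g : Ordinal → Ordinal := STAux.seqA next F with hgdef
    have hg := STAux.seqA_prop next F U hnext hUsub hF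
    have hid := STAux.seqA_le next F U hnext hUsub hF
    have hgU : ∀ j, j < omega1 → g j ∈ U := fun j hj => (hg j hj).1
    -- `height (a γ) > γ` for `γ ∈ U`
    have hFgt : ∀ γ ∈ U, γ < F γ := by
      intro γ hγ
      have h1 := τ.height_mono (x γ) (a γ) (hxa γ (hUS γ hγ) (hU0 γ hγ))
      rwa [hhx γ (hUS γ hγ) (hU0 γ hγ)] at h1
    -- the chosen points of `A` are pairwise incomparable
    have hkey2 : ∀ i j, i < j → j < omega1 →
        ¬ a (g i) ≤ a (g j) ∧ ¬ a (g j) ≤ a (g i) := by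
      intro i j hij hj
      have hi : i < omega1 := hij.trans hj
      have hγU : g i ∈ U := hgU i hi
      have hγ'U : g j ∈ U := hgU j hj
      have hFlt : F (g i) < g j := ((hg j hj).2 i hij).2
      have hS1 := hUS _ hγU
      have h01 := hU0 _ hγU
      have hS2 := hUS _ hγ'U
      have h02 := hU0 _ hγ'U
      have hγ'F : g j < F (g j) := hFgt _ hγ'U
      constructor
      · intro hle
        rcases lt_or_eq_of_le hle with hlt | heq
        · rcases τ.pred_linear (a (g j)) (a (g i)) (x (g j)) hlt (hxa _ hS2 h02) with h | h
          · -- `a (g i) ≤ x (g j)`: contradicts the gap at `g j`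
            refine hgap _ hS2 h02 (a (g i)) (haA _ hS1 h01) ⟨?_, h⟩
            have h1 : s (g i) < a (g i) := lt_trans (hsx _ hS1 h01) (hxa _ hS1 h01)
            rw [hUv _ hγU] at h1
            rwa [hUv _ hγ'U]
          · -- `x (g j) ≤ a (g i)`: impossible by heights
            have hh : τ.height (x (g j)) ≤ τ.height (a (g i)) := by
              rcases lt_or_eq_of_le h with h' | h'
              · exact le_of_lt (τ.height_mono _ _ h')
              · rw [h']
            rw [hhx _ hS2 h02] at hh
            exact absurd (lt_of_le_of_lt hh hFlt) (lt_irrefl _)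
        · -- equality impossible by heights
          have h1 : F (g i) = F (g j) := by rw [hFdef]; simp only [heq]
          rw [h1] at hFlt
          exact absurd (hFlt.trans hγ'F) (lt_irrefl _)
      · intro hle
        have hh : τ.height (a (g j)) ≤ τ.height (a (g i)) := by
          rcases lt_or_eq_of_le hle with h' | h'
          · exact le_of_lt (τ.height_mono _ _ h')
          · rw [h']
        exact absurd (lt_of_le_of_lt hh (hFlt.trans hγ'F)) (lt_irrefl _)
    -- the set of chosen points is an uncountable antichain: contradiction
    set AC : Set T := (fun j => a (g j)) '' (Set.Iio omega1) with hACdef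
    have hpair : AC.Pairwise (fun p q => ¬ p ≤ q ∧ ¬ q ≤ p) := by
      rintro p ⟨i, hi, rfl⟩ q ⟨j, hj, rfl⟩ hne
      rcases lt_trichotomy i j with h | h | h
      · exact hkey2 i j h hj
      · exact absurd (by rw [h]) hne
      · exact ⟨(hkey2 j i h hi).2, (hkey2 j i h hi).1⟩
    have hACcnt := τ.antichains_countable AC hpair
    obtain ⟨b, hb, hbd⟩ := STAux.bounded_of_countable (s := τ.height '' AC)
      (by rintro _ ⟨t, _, rfl⟩; exact τ.height_lt t) (hACcnt.image _)
    have hjb : b ≤ g b := hid b hb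
    have hblt : b < F (g b) := lt_of_le_of_lt hjb (hFgt _ (hgU b hb))
    have hmem : F (g b) ∈ τ.height '' AC := ⟨a (g b), ⟨b, hb, rfl⟩, rfl⟩
    exact absurd (hbd _ hmem) (not_lt.mpr (le_of_lt hblt))
  · -- no fiber is stationary: contradicts stationarity of `S` (Fodor)
    have hclub : ∀ β, ∃ C, IsClubInOmega1 C ∧ ∀ γ, γ ∈ Fib β → γ ∉ C := by
      intro β
      have hns : ¬ IsStationaryInOmega1 (Fib β) := fun h => hst ⟨β, h⟩
      rw [IsStationaryInOmega1] at hns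
      push_neg at hns
      obtain ⟨C, hC, hCne⟩ := hns (fun γ hγ => hS.1 hγ.1)
      exact ⟨C, hC, fun γ hγF hγC => Set.eq_empty_iff_forall_notMem.mp hCne γ ⟨hγF, hγC⟩⟩
    choose C hC hCmiss using hclub
    obtain ⟨γ, hγS, hγD⟩ := hS.2 _ (STAux.diagonal_club C hC)
    have hβ : τ.height (s γ) < γ := by
      have h1 := τ.height_mono (s γ) (x γ) (hsx γ hγS hγD.2.1)
      rwa [hhx γ hγS hγD.2.1] at h1
    exact hCmiss _ γ ⟨hγS, hγD.2.1, rfl⟩ (hγD.2.2 _ hβ)
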